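/- Let r ≥ 1, let γ_1,…,γ_r ∈ ℂ, and let ξ_1,…,ξ_r ∈ ℂ∖{1} be roots of unity. Then for all n_1,…,n_r ∈ ℕ₀, the twisted multiple Bernoulli number ℬ(n_1,…,n_r; ξ_1,…,ξ_r; γ_1,…,γ_r) lies in the ℚ-subalgebra of ℂ generated by the set {ℬ_m(ξ_j) : m ∈ ℕ₀, 1 ≤ j ≤ r} ∪ {γ_1,…,γ_r} (i.e. it belongs to Algebra.adjoin ℚ of this set). -/

import Mathlib

/-- The twisted Bernoulli numbers `ℬ_n(ξ)`, defined by
`1/(1 - ξ·exp t) = Σ_{n≥0} ℬ_n(ξ) tⁿ/n!` in `ℂ[[t]]`. -/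
noncomputable def twistedBernoulli (ξ : ℂ) (n : ℕ) : ℂ :=
  (Nat.factorial n : ℂ) *
    PowerSeries.coeff n (1 - PowerSeries.C ξ * PowerSeries.exp ℂ)⁻¹

/-- The power series `exp(γ (t_j + ⋯ + t_r)) = Σ_{m≥0} γ^m (t_j+⋯+t_r)^m / m!`
in `ℂ[[t_1,…,t_r]]`, defined coefficientwise (the `m`-th summand is homogeneous of
degree `m`, so only `m = |d|` contributes to the coefficient at a monomial `d`). -/
noncomputable def expShift (r : ℕ) (j : Fin r) (γ : ℂ) : MvPowerSeries (Fin r) ℂ :=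
  fun d =>
    (γ ^ (d.sum fun _ e => e) / (Nat.factorial (d.sum fun _ e => e) : ℂ)) *
      MvPowerSeries.coeff d
        ((∑ k ∈ Finset.univ.filter fun k => j ≤ k, MvPowerSeries.X k) ^ (d.sum fun _ e => e))

/-- The twisted multiple Bernoulli numbers `ℬ(n_1,…,n_r; ξ_1,…,ξ_r; γ_1,…,γ_r)`,
defined by `∏_{j=1}^r (1 − ξ_j·exp(γ_j(t_j+⋯+t_r)))⁻¹
  = Σ_n ℬ(n;ξ;γ) t_1^{n_1}⋯t_r^{n_r}/(n_1!⋯n_r!)` in `ℂ[[t_1,…,t_r]]`. -/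
noncomputable def multipleTwistedBernoulli (r : ℕ) (ξ γ : Fin r → ℂ) (n : Fin r → ℕ) : ℂ :=
  (∏ j, (Nat.factorial (n j) : ℂ)) *
    MvPowerSeries.coeff (Finsupp.equivFunOnFinite.symm n)
      (∏ j, (1 - MvPowerSeries.C (ξ j) * expShift r j (γ j))⁻¹)

namespace TMBaux

open Finset

/-- The sum `t_j + ⋯ + t_r` as a multivariate power series. -/
noncomputable def S (r : ℕ) (j : Fin r) : MvPowerSeries (Fin r) ℂ :=
  ∑ k ∈ Finset.univ.filter fun k => j ≤ k, MvPowerSeries.X k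

lemma finsupp_sum_eq_degree {r : ℕ} (d : Fin r →₀ ℕ) :
    (d.sum fun _ e => e) = d.degree := rfl

lemma degree_add {r : ℕ} (u v : Fin r →₀ ℕ) :
    (u + v).degree = u.degree + v.degree := by
  simp only [Finsupp.degree_eq_weight_one, map_add]

/-- Homogeneity: the coefficient of `d` in `S^m` vanishes unless `|d| = m`. -/
lemma coeff_S_pow_eq_zero {r : ℕ} (j : Fin r) {m : ℕ} {d : Fin r →₀ ℕ}
    (hd : d.degree ≠ m) : MvPowerSeries.coeff d (S r j ^ m) = 0 := by
  have hS : S r j = ((∑ k ∈ Finset.univ.filter fun k => j ≤ k, MvPolynomial.X k :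
      MvPolynomial (Fin r) ℂ) : MvPowerSeries (Fin r) ℂ) := by
    rw [← MvPolynomial.coeToMvPowerSeries.ringHom_apply, map_sum]
    simp [S, MvPolynomial.coeToMvPowerSeries.ringHom_apply]
  rw [hS, ← MvPolynomial.coe_pow, MvPolynomial.coeff_coe]
  have hhom : MvPolynomial.IsHomogeneous
      ((∑ k ∈ Finset.univ.filter fun k => j ≤ k, MvPolynomial.X k :
        MvPolynomial (Fin r) ℂ) ^ m) m := by
    have := (MvPolynomial.IsHomogeneous.sum (Finset.univ.filter fun k => j ≤ k)
      (fun k => (MvPolynomial.X k : MvPolynomial (Fin r) ℂ)) 1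
      (fun k _ => MvPolynomial.isHomogeneous_X _ _)).pow m
    simpa using this
  exact hhom.coeff_eq_zero hd

/-- The coefficient of `S^m` is a rational number (image of `ℚ`). -/
lemma coeff_S_pow_rat {r : ℕ} (j : Fin r) (m : ℕ) (d : Fin r →₀ ℕ) :
    ∃ q : ℚ, MvPowerSeries.coeff d (S r j ^ m) = algebraMap ℚ ℂ q := by
  have hS : S r j = MvPowerSeries.map (algebraMap ℚ ℂ)
      (∑ k ∈ Finset.univ.filter fun k => j ≤ k, MvPowerSeries.X k) := by
    rw [map_sum]
    simp [S, MvPowerSeries.map_X]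
  refine ⟨MvPowerSeries.coeff d
    ((∑ k ∈ Finset.univ.filter fun k => j ≤ k, MvPowerSeries.X k : MvPowerSeries (Fin r) ℚ) ^ m), ?_⟩
  rw [hS, ← map_pow, MvPowerSeries.coeff_map]

lemma coeff_inv_one_sub (ξ : ℂ) (hξ : ξ ≠ 1) (n : ℕ) :
    PowerSeries.coeff n (1 - PowerSeries.C ξ * PowerSeries.exp ℂ)⁻¹ =
      twistedBernoulli ξ n / (Nat.factorial n : ℂ) := by
  rw [twistedBernoulli, mul_div_cancel_left₀ _
    (by exact_mod_cast (Nat.factorial_pos n).ne' : ((Nat.factorial n : ℂ)) ≠ 0)]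

lemma constCoeff_ne (ξ : ℂ) (hξ : ξ ≠ 1) :
    PowerSeries.constantCoeff (1 - PowerSeries.C ξ * PowerSeries.exp ℂ) ≠ 0 := by
  simp only [map_sub, map_one, map_mul, PowerSeries.constantCoeff_C,
    PowerSeries.constantCoeff_exp, mul_one]
  exact sub_ne_zero.mpr (fun h => hξ h.symm)

/-- The one-variable recursion satisfied by the twisted Bernoulli numbers. -/
lemma one_var_identity (ξ : ℂ) (hξ : ξ ≠ 1) (N : ℕ) :
    twistedBernoulli ξ N / (Nat.factorial N : ℂ) -
      ξ * ∑ ab ∈ Finset.HasAntidiagonal.antidiagonal N,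
        (1 / (Nat.factorial ab.1 : ℂ)) * (twistedBernoulli ξ ab.2 / (Nat.factorial ab.2 : ℂ)) =
      if N = 0 then 1 else 0 := by
  have h1 : (1 - PowerSeries.C ξ * PowerSeries.exp ℂ) *
      (1 - PowerSeries.C ξ * PowerSeries.exp ℂ)⁻¹ = 1 :=
    PowerSeries.mul_inv_cancel _ (constCoeff_ne ξ hξ)
  have h2 := congrArg (PowerSeries.coeff N) h1
  rw [PowerSeries.coeff_mul, PowerSeries.coeff_one] at h2
  have h3 : ∀ ab ∈ Finset.HasAntidiagonal.antidiagonal N,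
      PowerSeries.coeff ab.1 (1 - PowerSeries.C ξ * PowerSeries.exp ℂ) *
        PowerSeries.coeff ab.2 (1 - PowerSeries.C ξ * PowerSeries.exp ℂ)⁻¹ =
      (if ab.1 = 0 then 1 else 0) * (twistedBernoulli ξ ab.2 / (Nat.factorial ab.2 : ℂ)) -
        ξ * ((1 / (Nat.factorial ab.1 : ℂ)) *
          (twistedBernoulli ξ ab.2 / (Nat.factorial ab.2 : ℂ))) := by
    intro ab _
    rw [map_sub, PowerSeries.coeff_one, PowerSeries.coeff_C_mul,
      PowerSeries.coeff_exp, coeff_inv_one_sub ξ hξ]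
    have : (algebraMap ℚ ℂ) (1 / (Nat.factorial ab.1 : ℚ)) = 1 / (Nat.factorial ab.1 : ℂ) := by
      push_cast
      ring
    rw [this]
    ring
  rw [Finset.sum_congr rfl h3, Finset.sum_sub_distrib, ← Finset.mul_sum] at h2
  have h4 : ∑ ab ∈ Finset.HasAntidiagonal.antidiagonal N,
      (if ab.1 = 0 then 1 else 0) * (twistedBernoulli ξ ab.2 / (Nat.factorial ab.2 : ℂ)) =
      twistedBernoulli ξ N / (Nat.factorial N : ℂ) := by
    rw [Finset.sum_eq_single_of_mem (0, N)]
    · simp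
    · simp [Finset.HasAntidiagonal.mem_antidiagonal]
    · intro b hb hbne
      have : b.1 ≠ 0 := by
        intro h0
        apply hbne
        have := Finset.HasAntidiagonal.mem_antidiagonal.mp hb
        ext
        · exact h0
        · simp only at this ⊢; omega
      simp [this]
  rw [h4] at h2
  exact h2

/-- The claimed inverse series of `1 - ξ exp(γ(t_j+⋯+t_r))`. -/
noncomputable def G (r : ℕ) (j : Fin r) (ξ γ : ℂ) : MvPowerSeries (Fin r) ℂ :=
  fun d => twistedBernoulli ξ d.degree * γ ^ d.degree / (Nat.factorial d.degree : ℂ) *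
    MvPowerSeries.coeff d (S r j ^ d.degree)

lemma coeff_G {r : ℕ} (j : Fin r) (ξ γ : ℂ) (d : Fin r →₀ ℕ) :
    MvPowerSeries.coeff d (G r j ξ γ) =
      twistedBernoulli ξ d.degree * γ ^ d.degree / (Nat.factorial d.degree : ℂ) *
        MvPowerSeries.coeff d (S r j ^ d.degree) := rfl

lemma coeff_expShift {r : ℕ} (j : Fin r) (γ : ℂ) (d : Fin r →₀ ℕ) :
    MvPowerSeries.coeff d (expShift r j γ) =
      (γ ^ d.degree / (Nat.factorial d.degree : ℂ)) *
        MvPowerSeries.coeff d (S r j ^ d.degree) := rfl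

/-- Key lemma: `G` is a right inverse of `1 - ξ·expShift`. -/
lemma mul_G {r : ℕ} (j : Fin r) (ξ γ : ℂ) (hξ : ξ ≠ 1) :
    (1 - MvPowerSeries.C ξ * expShift r j γ) * G r j ξ γ = 1 := by
  apply MvPowerSeries.ext
  intro d
  classical
  set N := d.degree with hN
  rw [sub_mul, one_mul, mul_assoc, map_sub, MvPowerSeries.coeff_C_mul]
  have hEG : MvPowerSeries.coeff d (expShift r j γ * G r j ξ γ) =
      (∑ ab ∈ Finset.HasAntidiagonal.antidiagonal N,
        (γ ^ ab.1 / (Nat.factorial ab.1 : ℂ)) *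
          (twistedBernoulli ξ ab.2 * γ ^ ab.2 / (Nat.factorial ab.2 : ℂ))) *
        MvPowerSeries.coeff d (S r j ^ N) := by
    rw [MvPowerSeries.coeff_mul]
    have step : ∀ p ∈ Finset.HasAntidiagonal.antidiagonal d,
        MvPowerSeries.coeff p.1 (expShift r j γ) * MvPowerSeries.coeff p.2 (G r j ξ γ) =
        ∑ ab ∈ Finset.HasAntidiagonal.antidiagonal N,
          (γ ^ ab.1 / (Nat.factorial ab.1 : ℂ)) *
            (twistedBernoulli ξ ab.2 * γ ^ ab.2 / (Nat.factorial ab.2 : ℂ)) *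
            (MvPowerSeries.coeff p.1 (S r j ^ ab.1) *
              MvPowerSeries.coeff p.2 (S r j ^ ab.2)) := by
      intro p hp
      have hpd : p.1 + p.2 = d := Finset.HasAntidiagonal.mem_antidiagonal.mp hp
      have hdeg : p.1.degree + p.2.degree = N := by rw [hN, ← hpd, degree_add]
      rw [Finset.sum_eq_single_of_mem (p.1.degree, p.2.degree)
        (Finset.HasAntidiagonal.mem_antidiagonal.mpr hdeg)]
      · rw [coeff_expShift, coeff_G]
        ring
      · intro ab hab habne
        rcases ne_or_eq ab.1 p.1.degree with h1 | h1
        · rw [coeff_S_pow_eq_zero j (fun h => h1 h.symm)]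
          ring
        · have h2 : ab.2 ≠ p.2.degree := by
            intro h2
            apply habne
            ext
            · exact h1
            · exact h2
          rw [coeff_S_pow_eq_zero j (fun h => h2 h.symm)]
          ring
    rw [Finset.sum_congr rfl step, Finset.sum_comm, Finset.sum_mul]
    refine Finset.sum_congr rfl fun ab hab => ?_
    rw [← Finset.mul_sum]
    congr 1
    have habN : ab.1 + ab.2 = N := Finset.HasAntidiagonal.mem_antidiagonal.mp hab
    rw [← habN, pow_add, MvPowerSeries.coeff_mul]
  rw [hEG, coeff_G, ← hN]
  have key : twistedBernoulli ξ N * γ ^ N / (Nat.factorial N : ℂ) -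
      ξ * ∑ ab ∈ Finset.HasAntidiagonal.antidiagonal N,
        (γ ^ ab.1 / (Nat.factorial ab.1 : ℂ)) *
          (twistedBernoulli ξ ab.2 * γ ^ ab.2 / (Nat.factorial ab.2 : ℂ)) =
      γ ^ N * (if N = 0 then 1 else 0) := by
    have h := one_var_identity ξ hξ N
    have hsum : ∑ ab ∈ Finset.HasAntidiagonal.antidiagonal N,
        (γ ^ ab.1 / (Nat.factorial ab.1 : ℂ)) *
          (twistedBernoulli ξ ab.2 * γ ^ ab.2 / (Nat.factorial ab.2 : ℂ)) =
        γ ^ N * ∑ ab ∈ Finset.HasAntidiagonal.antidiagonal N,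
          (1 / (Nat.factorial ab.1 : ℂ)) *
            (twistedBernoulli ξ ab.2 / (Nat.factorial ab.2 : ℂ)) := by
      rw [Finset.mul_sum]
      refine Finset.sum_congr rfl fun ab hab => ?_
      have habN : ab.1 + ab.2 = N := Finset.HasAntidiagonal.mem_antidiagonal.mp hab
      rw [← habN, pow_add]
      ring
    rw [hsum]
    calc twistedBernoulli ξ N * γ ^ N / (Nat.factorial N : ℂ) -
          ξ * (γ ^ N * ∑ ab ∈ Finset.HasAntidiagonal.antidiagonal N,
            (1 / (Nat.factorial ab.1 : ℂ)) *
              (twistedBernoulli ξ ab.2 / (Nat.factorial ab.2 : ℂ)))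
        = γ ^ N * (twistedBernoulli ξ N / (Nat.factorial N : ℂ) -
            ξ * ∑ ab ∈ Finset.HasAntidiagonal.antidiagonal N,
              (1 / (Nat.factorial ab.1 : ℂ)) *
                (twistedBernoulli ξ ab.2 / (Nat.factorial ab.2 : ℂ))) := by ring
      _ = γ ^ N * (if N = 0 then 1 else 0) := by rw [h]
  have lhs_eq : twistedBernoulli ξ N * γ ^ N / (Nat.factorial N : ℂ) *
      MvPowerSeries.coeff d (S r j ^ N) -
      ξ * ((∑ ab ∈ Finset.HasAntidiagonal.antidiagonal N,
        (γ ^ ab.1 / (Nat.factorial ab.1 : ℂ)) *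
          (twistedBernoulli ξ ab.2 * γ ^ ab.2 / (Nat.factorial ab.2 : ℂ))) *
        MvPowerSeries.coeff d (S r j ^ N)) =
      (γ ^ N * (if N = 0 then 1 else 0)) * MvPowerSeries.coeff d (S r j ^ N) := by
    rw [← key]
    ring
  rw [lhs_eq, MvPowerSeries.coeff_one]
  by_cases hd0 : d = 0
  · subst hd0
    have : N = 0 := by rw [hN, map_zero]
    rw [this]
    simp [S]
  · have hNne : N ≠ 0 := by
      rw [hN]
      exact fun h => hd0 ((Finsupp.degree_eq_zero_iff d).mp h)
    simp [hNne, hd0]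

lemma inv_eq_G {r : ℕ} (j : Fin r) (ξ γ : ℂ) (hξ : ξ ≠ 1) :
    (1 - MvPowerSeries.C ξ * expShift r j γ)⁻¹ = G r j ξ γ := by
  rw [MvPowerSeries.inv_eq_iff_mul_eq_one]
  · rw [mul_comm]
    exact mul_G j ξ γ hξ
  · have h0 : MvPowerSeries.constantCoeff (expShift r j γ) = 1 := by
      rw [← MvPowerSeries.coeff_zero_eq_constantCoeff_apply, coeff_expShift,
        map_zero]
      simp
    rw [map_sub, map_one, map_mul, MvPowerSeries.constantCoeff_C, h0, mul_one]
    exact sub_ne_zero.mpr (fun h => hξ h.symm)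

end TMBaux

/-- The twisted multiple Bernoulli number `ℬ(n;ξ;γ)` lies in the `ℚ`-subalgebra of `ℂ`
generated by the single twisted Bernoulli numbers `ℬ_m(ξ_j)` together with `γ_1,…,γ_r`. -/
theorem multipleTwistedBernoulli_mem_adjoin (r : ℕ) (hr : 1 ≤ r) (γ ξ : Fin r → ℂ)
    (hξ1 : ∀ j, ξ j ≠ 1) (hξ : ∀ j, ∃ m : ℕ, 0 < m ∧ ξ j ^ m = 1) (n : Fin r → ℕ) :
    multipleTwistedBernoulli r ξ γ n ∈
      Algebra.adjoin ℚ
        ((⋃ j : Fin r, Set.range fun m : ℕ => twistedBernoulli (ξ j) m) ∪ Set.range γ) := by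
  classical
  set A := Algebra.adjoin ℚ
    ((⋃ j : Fin r, Set.range fun m : ℕ => twistedBernoulli (ξ j) m) ∪ Set.range γ) with hA
  have hB : ∀ (j : Fin r) (m : ℕ), twistedBernoulli (ξ j) m ∈ A := fun j m =>
    Algebra.subset_adjoin (Or.inl (Set.mem_iUnion.mpr ⟨j, ⟨m, rfl⟩⟩))
  have hγ : ∀ j : Fin r, γ j ∈ A := fun j =>
    Algebra.subset_adjoin (Or.inr ⟨j, rfl⟩)
  have hrat : ∀ q : ℚ, (q : ℂ) ∈ A := fun q => by
    have := A.algebraMap_mem q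
    rwa [eq_ratCast (algebraMap ℚ ℂ) q] at this
  rw [multipleTwistedBernoulli]
  have hprod : (∏ j, (1 - MvPowerSeries.C (ξ j) * expShift r j (γ j))⁻¹) =
      ∏ j, TMBaux.G r j (ξ j) (γ j) := by
    refine Finset.prod_congr rfl fun j _ => ?_
    exact TMBaux.inv_eq_G j (ξ j) (γ j) (hξ1 j)
  rw [hprod, MvPowerSeries.coeff_prod]
  refine Subalgebra.mul_mem A ?_ (Subalgebra.sum_mem A fun l _ => Subalgebra.prod_mem A
    fun j _ => ?_)
  · have : (∏ j, (Nat.factorial (n j) : ℂ)) =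
        ((∏ j, (Nat.factorial (n j) : ℚ) : ℚ) : ℂ) := by push_cast; rfl
    rw [this]
    exact hrat _
  · rw [TMBaux.coeff_G]
    obtain ⟨q, hq⟩ := TMBaux.coeff_S_pow_rat j ((l j).degree) (l j)
    rw [hq, eq_ratCast (algebraMap ℚ ℂ) q]
    have hfact : (twistedBernoulli (ξ j) (l j).degree * γ j ^ (l j).degree /
        (Nat.factorial (l j).degree : ℂ)) =
        twistedBernoulli (ξ j) (l j).degree * γ j ^ (l j).degree *
          (((Nat.factorial (l j).degree : ℚ))⁻¹ : ℚ) := by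
      push_cast
      ring
    rw [hfact]
    exact Subalgebra.mul_mem A (Subalgebra.mul_mem A
      (Subalgebra.mul_mem A (hB j _) (Subalgebra.pow_mem A (hγ j) _)) (hrat _)) (hrat q)
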